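/- Let k be a field, V a finite-dimensional k-vector space, and let R, S ⊆ End_k(V) be k-subalgebras of the endomorphism algebra of V. Assume: (i) R is a semisimple k-algebra; (ii) V is a free R-module; (iii) V is a semisimple S-module; (iv) R is the commutant (centralizer) of S in End_k(V), i.e. R = End_S(V); (v) there is a nonzero k-subspace U ⊆ V with RU ⊆ U and SU ⊆ U; (vi) the image of the natural ring homomorphism S → End_k(U) given by restriction is commutative. Then dim_k R = dim_k V, and there exists a ring homomorphism from R to an algebraic closure of k. -/

import Mathlib

open Module

set_option maxHeartbeats 2000000
set_option synthInstance.maxHeartbeats 200000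

section aux
variable {k : Type*} [Field k] {V : Type*} [AddCommGroup V] [Module k V]
  {R : Subalgebra k (Module.End k V)} {ι : Type*} (b : Basis ι R V)

/-- "right multiplication by `a` in coordinates", sending `b j` to `a • b i`. -/
noncomputable def rmap (a : R) (i j : ι) : Module.End k V where
  toFun v := (b.repr v j * a) • b i
  map_add' x y := by
    show (b.repr (x + y) j * a) • b i = (b.repr x j * a) • b i + (b.repr y j * a) • b i
    rw [map_add, Finsupp.add_apply, add_mul, add_smul]
  map_smul' c v := by
    show (b.repr (c • v) j * a) • b i = c • ((b.repr v j * a) • b i)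
    have h : b.repr (c • v) = c • b.repr v := (b.repr : V →ₗ[R] (ι →₀ R)).map_smul_of_tower c v
    rw [h, Finsupp.smul_apply, smul_mul_assoc, smul_assoc]

lemma rmap_apply (a : R) (i j : ι) (v : V) : rmap b a i j v = (b.repr v j * a) • b i := rfl

lemma rmap_comm (a : R) (i j : ι) (r : Module.End k V) (hr : r ∈ R) :
    rmap b a i j * r = r * rmap b a i j := by
  ext v
  show rmap b a i j (r v) = r (rmap b a i j v)
  have h : r v = (⟨r, hr⟩ : R) • v := rfl
  rw [rmap_apply, rmap_apply, h, map_smul, Finsupp.smul_apply, smul_eq_mul, mul_assoc, mul_smul]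
  rfl

lemma rmap_rmap [DecidableEq ι] (a a' : R) (i j i' j' : ι) (v : V) :
    rmap b a i j (rmap b a' i' j' v) =
      (if i' = j then (b.repr v j' * a') * a else 0) • b i := by
  rw [rmap_apply, rmap_apply, map_smul, Finsupp.smul_apply, Basis.repr_self, smul_eq_mul,
    Finsupp.single_apply]
  by_cases h : i' = j
  · rw [if_pos h, if_pos h, mul_one]
  · rw [if_neg h, if_neg h, mul_zero, zero_mul, zero_smul]

end aux

lemma pi_ss (S : Type*) [Ring S] (V : Type*) [AddCommGroup V] [Module S V]
    [IsSemisimpleModule S V] (m : ℕ) : IsSemisimpleModule S (Fin m → V) := by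
  apply isSemisimpleModule_of_isSemisimpleModule_submodule'
    (p := fun i : Fin m => LinearMap.range (LinearMap.single S (fun _ : Fin m => V) i))
  · intro i; exact IsSemisimpleModule.range _
  · exact LinearMap.iSup_range_single S _

lemma density (k : Type*) [Field k] (V : Type*) [AddCommGroup V] [Module k V]
    [FiniteDimensional k V]
    (S : Subalgebra k (Module.End k V))
    (hV : IsSemisimpleModule S V)
    (f : Module.End k V)
    (hf : ∀ r : Module.End k V, r ∈ Subalgebra.centralizer k (S : Set (Module.End k V)) →
      f * r = r * f) :
    f ∈ S := by
  set m := Module.finrank k V with hm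
  let β : Basis (Fin m) k V := Module.finBasis k V
  haveI : IsSemisimpleModule S (Fin m → V) := pi_ss S V m
  set w : Fin m → V := fun i => β i with hw
  set N : Submodule S (Fin m → V) := Submodule.span S {w} with hN
  obtain ⟨N', hcompl⟩ := exists_isCompl N
  set e : (Fin m → V) →ₗ[S] (Fin m → V) :=
    N.subtype.comp (Submodule.projectionOnto N N' hcompl) with he
  set g : Fin m → Fin m → Module.End k V := fun i j =>
    (LinearMap.proj i).comp ((e.restrictScalars k).comp
      (LinearMap.single k (fun _ : Fin m => V) j)) with hg
  have hgS : ∀ i j, g i j ∈ Subalgebra.centralizer k (S : Set (Module.End k V)) := by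
    intro i j
    rw [Subalgebra.mem_centralizer_iff]
    intro s hs
    ext v
    have h1 : (Pi.single j (s v) : Fin m → V) = (⟨s, hs⟩ : S) • (Pi.single j v : Fin m → V) := by
      funext l
      classical
      by_cases h : l = j
      · subst h; simp [Pi.single_apply]; rfl
      · simp [Pi.single_apply, h]
    simp only [Module.End.mul_apply, hg, LinearMap.comp_apply, LinearMap.restrictScalars_apply,
      LinearMap.single_apply, LinearMap.proj_apply]
    rw [h1, map_smul]
    rfl
  have hge : ∀ x : Fin m → V, ∀ i, e x i = ∑ j, g i j (x j) := by
    intro x i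
    conv_lhs => rw [← Finset.univ_sum_single x, map_sum]
    simp [hg]
  have hwN : w ∈ N := Submodule.mem_span_singleton_self w
  have hew : e w = w := by
    simp only [he, LinearMap.comp_apply, Submodule.subtype_apply]
    rw [Submodule.linearProjOfIsCompl_apply_left hcompl ⟨w, hwN⟩]
  set Fw : Fin m → V := fun i => f (w i) with hFw
  have hFwN : Fw ∈ N := by
    have heq : Fw = e Fw := by
      funext i
      rw [hge Fw i]
      have h2 : ∀ j, g i j (Fw j) = f (g i j (w j)) := by
        intro j
        have h3 := DFunLike.congr_fun (hf (g i j) (hgS i j)) (w j)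
        simp only [Module.End.mul_apply] at h3
        exact h3.symm
      simp_rw [h2, ← map_sum, ← hge w i, hew]
      rfl
    rw [heq, he]
    exact Submodule.coe_mem _
  rw [hN, Submodule.mem_span_singleton] at hFwN
  obtain ⟨s, hs⟩ := hFwN
  have : f = (s : Module.End k V) := by
    apply β.ext
    intro i
    have := congr_fun hs i
    exact (by simpa [hFw, hw] using this.symm : f (β i) = s • β i)
  rw [this]
  exact s.2

/-- **Lemma 1 of Ruppert, "Torsion points of abelian varieties in abelian
extensions".** Let `V` be a finite-dimensional vector space over a field `k`, and let
`R, S ⊆ End_k(V)` be `k`-subalgebras such that `R` is semisimple, `V` is a free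
`R`-module, `V` is a semisimple `S`-module, `R` is the commutant of `S` in `End_k(V)`,
and there is a nonzero subspace `U ⊆ V` that is `R`- and `S`-invariant on which the
induced action of `S` is commutative. Then `dim_k R = dim_k V` and there is a ring
homomorphism `R → k̄` into the algebraic closure of `k`. -/
theorem dim_eq_and_ringHom_to_algClosure_of_commutative_on_invariant_subspace
    (k : Type*) [Field k] (V : Type*) [AddCommGroup V] [Module k V]
    [FiniteDimensional k V]
    (R S : Subalgebra k (Module.End k V))
    (hss : IsSemisimpleRing R)
    (hfree : Module.Free R V)
    (hV : IsSemisimpleModule S V)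
    (hcent : R = Subalgebra.centralizer k (S : Set (Module.End k V)))
    (U : Submodule k V) (hU : U ≠ ⊥)
    (hRU : ∀ r ∈ R, ∀ u ∈ U, r u ∈ U)
    (hSU : ∀ s ∈ S, ∀ u ∈ U, s u ∈ U)
    (hScommU : ∀ s ∈ S, ∀ s' ∈ S, ∀ u ∈ U, s (s' u) = s' (s u)) :
    Module.finrank k R = Module.finrank k V ∧
      Nonempty (R →+* AlgebraicClosure k) := by
  classical
  have hdens : ∀ f : Module.End k V, (∀ r ∈ R, f * r = r * f) → f ∈ S := by
    intro f hf
    exact density k V S hV f (fun r hr => hf r (hcent ▸ hr))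
  obtain ⟨u0, hu0U, hu0⟩ := Submodule.exists_mem_ne_zero_of_ne_bot hU
  haveI : Nontrivial V := ⟨u0, 0, hu0⟩
  let b : Basis (Module.Free.ChooseBasisIndex R V) R V := Module.Free.chooseBasis R V
  set ι := Module.Free.ChooseBasisIndex R V with hι
  have hrS : ∀ (a : R) (i j : ι), rmap b a i j ∈ S := fun a i j =>
    hdens _ (fun r hr => rmap_comm b a i j r hr)
  -- coefficients of elements of U vanish at j whenever there is i ≠ j
  have hvan : ∀ u ∈ U, ∀ i j : ι, i ≠ j → b.repr u j = 0 := by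
    intro u hu i j hij
    have h := hScommU _ (hrS 1 i j) _ (hrS 1 j i) u hu
    rw [rmap_rmap, rmap_rmap, if_pos rfl, if_pos rfl] at h
    have h2 := congrArg (fun x => b.repr x j) h
    simp only [map_smul, Basis.repr_self, Finsupp.smul_apply, Finsupp.single_apply,
      if_neg hij, if_pos rfl] at h2
    simpa using h2.symm
  haveI hsub : Subsingleton ι := by
    by_contra hns
    haveI : Nontrivial ι := not_subsingleton_iff_nontrivial.mp hns
    apply hu0
    have hz : ∀ j, b.repr u0 j = 0 := by
      intro j
      obtain ⟨i, hi⟩ := exists_ne j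
      exact hvan u0 hu0U i j hi
    have : b.repr u0 = 0 := Finsupp.ext hz
    exact b.repr.map_eq_zero_iff.mp this
  haveI : Unique ι := uniqueOfSubsingleton (Classical.choice b.index_nonempty)
  -- dimension statement
  have e3 : V ≃ₗ[R] R := b.repr.trans (Finsupp.LinearEquiv.finsuppUnique R R ι)
  have hfr : Module.finrank k R = Module.finrank k V := ((e3.restrictScalars k).finrank_eq).symm
  refine ⟨hfr, ?_⟩
  -- map to algebraic closure
  set i0 : ι := default with hi0
  have hrep : ∀ v : V, (b.repr v i0) • b i0 = v := by
    intro v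
    conv_rhs => rw [← b.linearCombination_repr v]
    rw [Finsupp.linearCombination_unique]
  set ρ : R → Module.End k V := fun a => rmap b a i0 i0 with hρ
  have hρapp : ∀ (a : R) (v : V), ρ a v = (b.repr v i0 * a) • b i0 := fun a v => rfl
  have hρS : ∀ a, ρ a ∈ S := fun a => hrS a i0 i0
  have hρU : ∀ a, ∀ u ∈ U, ρ a u ∈ U := fun a u hu => hSU _ (hρS a) u hu
  have hρρ : ∀ a a' u, ρ a (ρ a' u) = ((b.repr u i0 * a') * a) • b i0 := by
    intro a a' u
    rw [hρ]
    rw [rmap_rmap b a a' i0 i0 i0 i0 u, if_pos rfl]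
  let f : R → Module.End k ↥U := fun a => (ρ a).restrict (p := U) (q := U) (hρU a)
  have hfapp : ∀ (a : R) (u : ↥U), (f a u : V) = ρ a u.1 :=
    fun a u => LinearMap.restrict_coe_apply _ _ _
  have hfmul : ∀ (a a' : R) (u : ↥U), ((f a * f a') u : V) = ρ a (ρ a' u.1) := by
    intro a a' u
    rw [Module.End.mul_apply, hfapp, hfapp]
  let φ : R →ₐ[k] Module.End k ↥U :=
    { toFun := f
      map_one' := by
        ext u
        rw [hfapp, Module.End.one_apply, hρapp, mul_one, hrep]
      map_mul' := by
        intro a a'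
        ext u
        rw [hfapp, hfmul, hScommU _ (hρS a) _ (hρS a') u.1 u.2, hρρ a' a, hρapp, mul_assoc]
      map_zero' := by
        ext u
        rw [hfapp, hρapp, mul_zero, zero_smul, LinearMap.zero_apply, ZeroMemClass.coe_zero]
      map_add' := by
        intro a a'
        ext u
        rw [hfapp, LinearMap.add_apply, Submodule.coe_add, hfapp, hfapp, hρapp, hρapp, hρapp,
          mul_add, add_smul]
      commutes' := by
        intro c
        ext u
        rw [hfapp, Module.algebraMap_end_apply, SetLike.val_smul, hρapp,
          Algebra.algebraMap_eq_smul_one, mul_smul_comm, mul_one, smul_assoc, hrep] }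
  have hφf : ∀ a, φ a = f a := fun a => rfl
  have hφ : ∀ a a', φ a * φ a' = φ a' * φ a := by
    intro a a'
    ext u
    rw [hφf, hφf, hfmul, hfmul, hScommU _ (hρS a) _ (hρS a') u.1 u.2]
  set A : Subalgebra k (Module.End k ↥U) := φ.range with hA
  have hφ : ∀ a a', φ a * φ a' = φ a' * φ a := by
    intro a a'
    ext u
    show ρ a (ρ a' u.1) = ρ a' (ρ a u.1)
    exact hScommU _ (hρS a) _ (hρS a') u.1 u.2
  letI : CommRing A :=
    { (inferInstance : Ring A) with
      mul_comm := by
        rintro ⟨x, a, rfl⟩ ⟨y, a', rfl⟩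
        apply Subtype.ext
        show φ a * φ a' = φ a' * φ a
        exact hφ a a' }
  haveI : Nontrivial ↥U := Submodule.nontrivial_iff_ne_bot.mpr hU
  haveI : Nontrivial A := by
    refine nontrivial_of_ne 0 1 fun h => ?_
    have := congrArg (fun x : A => (x : Module.End k ↥U)) h
    exact zero_ne_one (α := Module.End k ↥U) this
  obtain ⟨m', hm'⟩ := Ideal.exists_maximal A
  haveI := hm'
  letI : Field (A ⧸ m') := Ideal.Quotient.field m'
  haveI : FiniteDimensional k A := inferInstance
  haveI : FiniteDimensional k (A ⧸ m') :=
    Module.Finite.of_surjective (Ideal.Quotient.mkₐ k m').toLinearMap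
      (Ideal.Quotient.mkₐ_surjective k m')
  haveI : Algebra.IsAlgebraic k (A ⧸ m') := Algebra.IsAlgebraic.of_finite k _
  let ψ : (A ⧸ m') →ₐ[k] AlgebraicClosure k := IsAlgClosed.lift
  exact ⟨ψ.toRingHom.comp ((Ideal.Quotient.mk m').comp φ.rangeRestrict.toRingHom)⟩
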